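/- Let 0 < β < 1, c > 0, δ ≥ 0, and define g(r) = e^{−c r^β} r^{−δ} for r ≥ 1. Then there is a constant c₁ > 0 such that for all x ∈ ℝ^d with |x| ≥ 2 one has ∫_{|y|>|x|/2, |x−y|>|x|/2} g(|x−y|) g(|y|) dy ≤ c₁ e^{−c(1−β)(|x|/2)^β} · g(|x|). -/

import Mathlib

open MeasureTheory Real Set Filter

lemma two_rpow_lt (β : ℝ) (hβ0 : 0 < β) (hβ1 : β < 1) : (2:ℝ) ^ β < 1 + β := by
  have hlog : (0:ℝ) < Real.log 2 := Real.log_pos one_lt_two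
  have h := strictConvexOn_exp.2 (Set.mem_univ (0:ℝ))
    (Set.mem_univ (Real.log 2)) hlog.ne (show (0:ℝ) < 1 - β by linarith) hβ0
    (show (1 - β) + β = 1 by ring)
  simp only [smul_eq_mul, mul_zero, zero_add, Real.exp_zero, Real.exp_log two_pos] at h
  rw [Real.rpow_def_of_pos two_pos, mul_comm]
  linarith

lemma aux1 (β : ℝ) (hβ0 : 0 < β) (hβ1 : β < 1) {u : ℝ} (hu : 1 ≤ u) :
    (1 + u) ^ β ≤ u ^ β + ((2:ℝ) ^ β - 1) := by
  have hd : ∀ v : ℝ, 0 < v → HasDerivAt (fun w : ℝ => w ^ β - (1 + w) ^ β)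
      (β * v ^ (β - 1) - β * (1 + v) ^ (β - 1)) v := by
    intro v hv
    have h1 : HasDerivAt (fun w : ℝ => w ^ β) (β * v ^ (β - 1)) v :=
      Real.hasDerivAt_rpow_const (Or.inl hv.ne')
    have h2 : HasDerivAt (fun w : ℝ => 1 + w) 1 v := (hasDerivAt_id v).const_add 1
    have h3 : HasDerivAt (fun w : ℝ => (1 + w) ^ β) (β * (1 + v) ^ (β - 1) * 1) v :=
      (Real.hasDerivAt_rpow_const (x := 1 + v) (p := β) (Or.inl (by positivity))).comp v h2
    exact (h1.sub h3).congr_deriv (by ring)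
  have hmono : MonotoneOn (fun w : ℝ => w ^ β - (1 + w) ^ β) (Set.Ici 1) := by
    apply monotoneOn_of_deriv_nonneg (convex_Ici 1)
    · intro v hv
      exact (hd v (lt_of_lt_of_le zero_lt_one hv)).continuousAt.continuousWithinAt
    · intro v hv
      rw [interior_Ici] at hv
      exact ((hd v (lt_trans zero_lt_one hv)).differentiableAt).differentiableWithinAt
    · intro v hv
      rw [interior_Ici] at hv
      rw [(hd v (lt_trans zero_lt_one hv)).deriv]
      have hvpos : (0:ℝ) < v := lt_trans zero_lt_one hv
      have : (1 + v) ^ (β - 1) ≤ v ^ (β - 1) :=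
        Real.rpow_le_rpow_of_nonpos hvpos (by linarith) (by linarith)
      nlinarith
  have hm := hmono (Set.mem_Ici.mpr le_rfl) (Set.mem_Ici.mpr hu) hu
  simp only [Real.one_rpow] at hm
  have h2 : (1:ℝ) + 1 = 2 := by norm_num
  rw [h2] at hm
  linarith

lemma aux2 (β : ℝ) (hβ0 : 0 < β) (hβ1 : β < 1) {a b : ℝ} (ha : 0 < a) (hb : 0 < b) :
    (a + b) ^ β + (2 - (2:ℝ) ^ β) * (min a b) ^ β ≤ a ^ β + b ^ β := by
  have key : ∀ a b : ℝ, 0 < a → a ≤ b → (a + b) ^ β ≤ ((2:ℝ) ^ β - 1) * a ^ β + b ^ β := by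
    intro a b ha hab
    have hb : 0 < b := lt_of_lt_of_le ha hab
    have hu : 1 ≤ b / a := (one_le_div ha).2 hab
    have h := aux1 β hβ0 hβ1 hu
    have h1 : (a + b) ^ β = a ^ β * (1 + b / a) ^ β := by
      rw [← Real.mul_rpow ha.le (by positivity)]
      congr 1
      field_simp
    have h4 : b ^ β = a ^ β * (b / a) ^ β := by
      rw [← Real.mul_rpow ha.le (by positivity)]
      congr 1
      field_simp
    have hap : (0:ℝ) ≤ a ^ β := Real.rpow_nonneg ha.le β
    calc (a + b) ^ β = a ^ β * (1 + b / a) ^ β := h1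
      _ ≤ a ^ β * ((b / a) ^ β + ((2:ℝ) ^ β - 1)) := mul_le_mul_of_nonneg_left h hap
      _ = ((2:ℝ) ^ β - 1) * a ^ β + b ^ β := by rw [mul_add, ← h4]; ring
  rcases le_total a b with h | h
  · rw [min_eq_left h]
    have := key a b ha h
    linarith
  · rw [min_eq_right h, add_comm a b]
    have := key b a hb h
    linarith

/-- Pointwise bound on the integrand. -/
lemma keyPt (β c δ : ℝ) (hβ0 : 0 < β) (hβ1 : β < 1) (hc : 0 < c) (hδ : 0 ≤ δ)
    (X a b : ℝ) (hX : 2 ≤ X) (ha : X / 2 < a) (hb : X / 2 < b) (hab : X ≤ a + b) :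
    (Real.exp (-c * a ^ β) * a ^ (-δ)) * (Real.exp (-c * b ^ β) * b ^ (-δ)) ≤
      (Real.exp (-(c * (1 + β - (2:ℝ) ^ β) * a ^ β)) +
          Real.exp (-(c * (1 + β - (2:ℝ) ^ β) * b ^ β))) *
        ((2:ℝ) ^ δ * (Real.exp (-c * (1 - β) * (X / 2) ^ β) *
          (Real.exp (-c * X ^ β) * X ^ (-δ)))) := by
  have hε : 0 < 1 + β - (2:ℝ) ^ β := by have := two_rpow_lt β hβ0 hβ1; linarith
  have hR1 : (1:ℝ) ≤ X / 2 := by linarith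
  have hR0 : (0:ℝ) < X / 2 := by linarith
  have ha0 : 0 < a := lt_trans hR0 ha
  have hb0 : 0 < b := lt_trans hR0 hb
  have hm : X / 2 ≤ min a b := le_min ha.le hb.le
  -- exponential part
  have hcore : X ^ β + (1 - β) * (X / 2) ^ β + (1 + β - (2:ℝ) ^ β) * (min a b) ^ β
      ≤ a ^ β + b ^ β := by
    have h1 := aux2 β hβ0 hβ1 ha0 hb0
    have e1 : X ^ β ≤ (a + b) ^ β := Real.rpow_le_rpow (by linarith) hab hβ0.le
    have e2 : (X / 2) ^ β ≤ (min a b) ^ β := Real.rpow_le_rpow hR0.le hm hβ0.le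
    have e3 : (1 - β) * (X / 2) ^ β ≤ (1 - β) * (min a b) ^ β :=
      mul_le_mul_of_nonneg_left e2 (by linarith)
    nlinarith
  have hmin : Real.exp (-(c * (1 + β - (2:ℝ) ^ β) * (min a b) ^ β)) ≤
      Real.exp (-(c * (1 + β - (2:ℝ) ^ β) * a ^ β)) +
        Real.exp (-(c * (1 + β - (2:ℝ) ^ β) * b ^ β)) := by
    rcases min_choice a b with h | h <;> rw [h]
    · linarith [(Real.exp_pos (-(c * (1 + β - (2:ℝ) ^ β) * b ^ β))).le]
    · linarith [(Real.exp_pos (-(c * (1 + β - (2:ℝ) ^ β) * a ^ β))).le]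
  have E1 : Real.exp (-c * a ^ β) * Real.exp (-c * b ^ β) ≤
      (Real.exp (-(c * (1 + β - (2:ℝ) ^ β) * a ^ β)) +
          Real.exp (-(c * (1 + β - (2:ℝ) ^ β) * b ^ β))) *
        (Real.exp (-c * (1 - β) * (X / 2) ^ β) * Real.exp (-c * X ^ β)) := by
    rw [← Real.exp_add]
    calc Real.exp (-c * a ^ β + -c * b ^ β)
        ≤ Real.exp (-(c * (1 + β - (2:ℝ) ^ β) * (min a b) ^ β) +
            (-c * (1 - β) * (X / 2) ^ β + -c * X ^ β)) := by
          apply Real.exp_le_exp.2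
          nlinarith [mul_le_mul_of_nonneg_left hcore hc.le]
      _ = Real.exp (-(c * (1 + β - (2:ℝ) ^ β) * (min a b) ^ β)) *
            (Real.exp (-c * (1 - β) * (X / 2) ^ β) * Real.exp (-c * X ^ β)) := by
          rw [Real.exp_add, Real.exp_add]
      _ ≤ _ := mul_le_mul_of_nonneg_right hmin (by positivity)
  have E2 : a ^ (-δ) * b ^ (-δ) ≤ (2:ℝ) ^ δ * X ^ (-δ) := by
    have p1 : a ^ (-δ) ≤ (X / 2) ^ (-δ) :=
      Real.rpow_le_rpow_of_nonpos hR0 ha.le (neg_nonpos.mpr hδ)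
    have p2 : b ^ (-δ) ≤ 1 :=
      Real.rpow_le_one_of_one_le_of_nonpos (le_trans hR1 hb.le) (neg_nonpos.mpr hδ)
    have p3 : (X / 2) ^ (-δ) = (2:ℝ) ^ δ * X ^ (-δ) := by
      rw [Real.div_rpow (by linarith) (by norm_num), Real.rpow_neg (by norm_num : (0:ℝ) ≤ 2),
        div_eq_mul_inv, inv_inv, mul_comm]
    calc a ^ (-δ) * b ^ (-δ) ≤ (X / 2) ^ (-δ) * 1 :=
          mul_le_mul p1 p2 (Real.rpow_nonneg hb0.le _) (Real.rpow_nonneg hR0.le _)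
      _ = (2:ℝ) ^ δ * X ^ (-δ) := by rw [mul_one, p3]
  calc (Real.exp (-c * a ^ β) * a ^ (-δ)) * (Real.exp (-c * b ^ β) * b ^ (-δ))
      = (Real.exp (-c * a ^ β) * Real.exp (-c * b ^ β)) * (a ^ (-δ) * b ^ (-δ)) := by ring
    _ ≤ ((Real.exp (-(c * (1 + β - (2:ℝ) ^ β) * a ^ β)) +
          Real.exp (-(c * (1 + β - (2:ℝ) ^ β) * b ^ β))) *
        (Real.exp (-c * (1 - β) * (X / 2) ^ β) * Real.exp (-c * X ^ β))) *
          ((2:ℝ) ^ δ * X ^ (-δ)) := by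
        apply mul_le_mul E1 E2 (by positivity) (by positivity)
    _ = _ := by ring

lemma growth_bound (n lam β : ℝ) (hn : 0 ≤ n) (hlam : 0 < lam) (hβ : 0 < β) :
    ∃ C : ℝ, 0 < C ∧ ∀ r : ℝ, 0 ≤ r → (1 + r) ^ n ≤ C * Real.exp (lam * r ^ β) := by
  have hv : Tendsto (fun r : ℝ => (2:ℝ) ^ n * (r ^ n * Real.exp (-(lam * r ^ β))))
      atTop (nhds 0) := by
    have h1 : Tendsto (fun s : ℝ => s ^ (n / β) * Real.exp (-lam * s)) atTop (nhds 0) :=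
      tendsto_rpow_mul_exp_neg_mul_atTop_nhds_zero (n / β) lam hlam
    have h2 : Tendsto (fun r : ℝ => r ^ β) atTop atTop := tendsto_rpow_atTop hβ
    have h3 := h1.comp h2
    have h4 : (fun r : ℝ => (r ^ β) ^ (n / β) * Real.exp (-lam * r ^ β)) =ᶠ[atTop]
        (fun r : ℝ => r ^ n * Real.exp (-(lam * r ^ β))) := by
      filter_upwards [eventually_gt_atTop (0:ℝ)] with r hr
      rw [← Real.rpow_mul hr.le, neg_mul]
      congr 2
      field_simp
    have h5 := (h3.congr' h4).const_mul ((2:ℝ) ^ n)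
    simpa using h5
  have hev : ∀ᶠ r in atTop, (2:ℝ) ^ n * (r ^ n * Real.exp (-(lam * r ^ β))) < 1 :=
    hv.eventually_lt_const zero_lt_one
  obtain ⟨M, hM⟩ := eventually_atTop.mp hev
  set M' := max M 1 with hM'def
  have hcont : Continuous (fun r : ℝ => (1 + r) ^ n * Real.exp (-(lam * r ^ β))) := by
    apply Continuous.mul
    · exact (continuous_iff_continuousAt.2 fun t =>
        Real.continuousAt_rpow_const _ _ (Or.inr hn)).comp (continuous_const.add continuous_id)
    · exact Real.continuous_exp.comp ((continuous_const.mul (continuous_iff_continuousAt.2 fun t =>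
        Real.continuousAt_rpow_const _ _ (Or.inr hβ.le))).neg)
  have hM'0 : (0:ℝ) ≤ M' := le_trans zero_le_one (le_max_right M 1)
  obtain ⟨r0, hr0mem, hr0⟩ := (isCompact_Icc (a := (0:ℝ)) (b := M')).exists_isMaxOn
    ⟨0, by constructor <;> simp [hM'0]⟩ hcont.continuousOn
  set C := (1 + r0) ^ n * Real.exp (-(lam * r0 ^ β)) + 1 with hCdef
  have hr00 : 0 ≤ (1 + r0) ^ n * Real.exp (-(lam * r0 ^ β)) := by
    have : (0:ℝ) ≤ 1 + r0 := by linarith [hr0mem.1]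
    positivity
  refine ⟨C, by positivity, fun r hr => ?_⟩
  have key : (1 + r) ^ n * Real.exp (-(lam * r ^ β)) ≤ C := by
    rcases le_total r M' with h | h
    · have := hr0 ⟨hr, h⟩
      simp only [Set.mem_setOf_eq] at this
      linarith
    · have h1 : (1:ℝ) ≤ r := le_trans (le_max_right M 1) h
      have hb := hM r (le_trans (le_max_left M 1) h)
      have hle : (1 + r) ^ n ≤ (2:ℝ) ^ n * r ^ n := by
        calc (1 + r) ^ n ≤ (2 * r) ^ n := Real.rpow_le_rpow (by linarith) (by linarith) hn
          _ = (2:ℝ) ^ n * r ^ n := Real.mul_rpow (by norm_num) (by linarith)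
      have hexp : (0:ℝ) ≤ Real.exp (-(lam * r ^ β)) := (Real.exp_pos _).le
      nlinarith
  have hpos : (0:ℝ) < Real.exp (lam * r ^ β) := Real.exp_pos _
  have := mul_le_mul_of_nonneg_right key hpos.le
  rw [mul_assoc, ← Real.exp_add, neg_add_cancel, Real.exp_zero, mul_one] at this
  exact this

lemma integrable_exp_neg_rpow_norm (d : ℕ) (lam β : ℝ) (hlam : 0 < lam) (hβ0 : 0 < β) :
    Integrable (fun y : EuclideanSpace ℝ (Fin d) => Real.exp (-(lam * ‖y‖ ^ β))) := by
  obtain ⟨C, hC, hbound⟩ := growth_bound ((d:ℝ) + 1) lam β (by positivity) hlam hβ0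
  have hnr : (Module.finrank ℝ (EuclideanSpace ℝ (Fin d)) : ℝ) < (d:ℝ) + 1 := by
    rw [finrank_euclideanSpace_fin]; linarith
  have hint : Integrable (fun y : EuclideanSpace ℝ (Fin d) =>
      C * (1 + ‖y‖) ^ (-((d:ℝ) + 1))) := (integrable_one_add_norm hnr).const_mul C
  apply hint.mono'
  · apply Continuous.aestronglyMeasurable
    exact Real.continuous_exp.comp ((continuous_const.mul ((continuous_iff_continuousAt.2 fun t =>
      Real.continuousAt_rpow_const _ _ (Or.inr hβ0.le)).comp
        continuous_norm)).neg)
  · filter_upwards with y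
    rw [Real.norm_eq_abs, Real.abs_exp]
    have h := hbound ‖y‖ (norm_nonneg y)
    have hp : (0:ℝ) < (1 + ‖y‖) ^ ((d:ℝ) + 1) := Real.rpow_pos_of_pos (by positivity) _
    have hkey : Real.exp (-(lam * ‖y‖ ^ β)) * (1 + ‖y‖) ^ ((d:ℝ) + 1) ≤ C := by
      calc Real.exp (-(lam * ‖y‖ ^ β)) * (1 + ‖y‖) ^ ((d:ℝ) + 1)
          ≤ Real.exp (-(lam * ‖y‖ ^ β)) * (C * Real.exp (lam * ‖y‖ ^ β)) :=
            mul_le_mul_of_nonneg_left h (Real.exp_pos _).le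
        _ = C := by rw [mul_comm C, ← mul_assoc, ← Real.exp_add, neg_add_cancel,
            Real.exp_zero, one_mul]
    rw [Real.rpow_neg (by positivity)]
    calc Real.exp (-(lam * ‖y‖ ^ β))
        = (Real.exp (-(lam * ‖y‖ ^ β)) * (1 + ‖y‖) ^ ((d:ℝ) + 1)) *
            ((1 + ‖y‖) ^ ((d:ℝ) + 1))⁻¹ := by
          field_simp
      _ ≤ C * ((1 + ‖y‖) ^ ((d:ℝ) + 1))⁻¹ :=
          mul_le_mul_of_nonneg_right hkey (inv_nonneg.2 hp.le)

theorem stmt10 (d : ℕ) (β c δ : ℝ) (hβ0 : 0 < β) (hβ1 : β < 1) (hc : 0 < c)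
    (hδ : 0 ≤ δ) :
    ∃ c₁ > 0, ∀ x : EuclideanSpace ℝ (Fin d), 2 ≤ ‖x‖ →
      (∫ y in {y : EuclideanSpace ℝ (Fin d) | ‖x‖ / 2 < ‖y‖ ∧ ‖x‖ / 2 < ‖x - y‖},
          (Real.exp (-c * ‖x - y‖ ^ β) * ‖x - y‖ ^ (-δ)) *
            (Real.exp (-c * ‖y‖ ^ β) * ‖y‖ ^ (-δ))) ≤
        c₁ * Real.exp (-c * (1 - β) * (‖x‖ / 2) ^ β) *
          (Real.exp (-c * ‖x‖ ^ β) * ‖x‖ ^ (-δ)) := by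
  have hε : 0 < 1 + β - (2:ℝ) ^ β := by have := two_rpow_lt β hβ0 hβ1; linarith
  set lam := c * (1 + β - (2:ℝ) ^ β) with hlamdef
  have hlam : 0 < lam := by positivity
  set E : EuclideanSpace ℝ (Fin d) → ℝ := fun y => Real.exp (-(lam * ‖y‖ ^ β)) with hEdef
  have hE : Integrable E := integrable_exp_neg_rpow_norm d lam β hlam hβ0
  set I := ∫ y, E y with hIdef
  have hI0 : 0 ≤ I := integral_nonneg fun y => (Real.exp_pos _).le
  refine ⟨(2:ℝ) ^ δ * (I + I) + 1, by positivity, fun x hx => ?_⟩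
  set K := Real.exp (-c * (1 - β) * (‖x‖ / 2) ^ β) *
    (Real.exp (-c * ‖x‖ ^ β) * ‖x‖ ^ (-δ)) with hKdef
  have hx0 : (0:ℝ) < ‖x‖ := by linarith
  have hK0 : 0 ≤ K := by positivity
  set g : EuclideanSpace ℝ (Fin d) → ℝ :=
    fun y => (E (x - y) + E y) * ((2:ℝ) ^ δ * K) with hgdef
  have hg : Integrable g := ((hE.comp_sub_left x).add hE).mul_const _
  have hS : MeasurableSet {y : EuclideanSpace ℝ (Fin d) | ‖x‖ / 2 < ‖y‖ ∧ ‖x‖ / 2 < ‖x - y‖} := by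
    apply MeasurableSet.inter
    · exact measurableSet_lt measurable_const continuous_norm.measurable
    · exact measurableSet_lt measurable_const
        (continuous_norm.comp (continuous_const.sub continuous_id)).measurable
  calc (∫ y in {y : EuclideanSpace ℝ (Fin d) | ‖x‖ / 2 < ‖y‖ ∧ ‖x‖ / 2 < ‖x - y‖},
          (Real.exp (-c * ‖x - y‖ ^ β) * ‖x - y‖ ^ (-δ)) *
            (Real.exp (-c * ‖y‖ ^ β) * ‖y‖ ^ (-δ)))
      ≤ ∫ y in {y : EuclideanSpace ℝ (Fin d) | ‖x‖ / 2 < ‖y‖ ∧ ‖x‖ / 2 < ‖x - y‖}, g y := by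
        apply integral_mono_of_nonneg
        · apply ae_of_all
          intro y
          positivity
        · exact hg.restrict
        · apply ae_restrict_of_forall_mem hS
          intro y hy
          obtain ⟨hy1, hy2⟩ := hy
          have hab : ‖x‖ ≤ ‖x - y‖ + ‖y‖ := by
            calc ‖x‖ = ‖x - y + y‖ := by rw [sub_add_cancel]
              _ ≤ ‖x - y‖ + ‖y‖ := norm_add_le _ _
          exact keyPt β c δ hβ0 hβ1 hc hδ ‖x‖ ‖x - y‖ ‖y‖ hx hy2 hy1 hab
    _ ≤ ∫ y, g y := by
        apply setIntegral_le_integral hg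
        apply ae_of_all
        intro y
        positivity
    _ = (I + I) * ((2:ℝ) ^ δ * K) := by
        rw [hgdef]
        rw [integral_mul_const]
        congr 1
        rw [integral_add (hE.comp_sub_left x) hE]
        congr 1
        exact integral_sub_left_eq_self E volume x
    _ ≤ ((2:ℝ) ^ δ * (I + I) + 1) * K := by
        have h2 : (0:ℝ) ≤ (2:ℝ) ^ δ := Real.rpow_nonneg (by norm_num) δ
        nlinarith
    _ = ((2:ℝ) ^ δ * (I + I) + 1) * Real.exp (-c * (1 - β) * (‖x‖ / 2) ^ β) *
          (Real.exp (-c * ‖x‖ ^ β) * ‖x‖ ^ (-δ)) := by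
        rw [hKdef]; ring
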